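/- Let $X$ be a Banach space and $I:X\to\mathbb{R}$ a convex Gateaux-differentiable functional satisfying the uniform-convexity-type estimate $\tfrac12 I(u)+\tfrac12 I(v)-I(\tfrac{u+v}{2})\ge \delta(\|\tfrac{u-v}{2}\|)$ for all $u,v\in X$, where $\delta:[0,\infty)\to[0,\infty)$ is nondecreasing with $\delta(t)>0$ for $t>0$. Suppose $u_n\rightharpoonup u$ weakly, $I$ is sequentially weakly lower semicontinuous, $I(u_n)$ converges, and $\limsup_n \langle I'(u_n),u_n-u\rangle\le 0$. Then $u_n\to u$ strongly in $X$. -/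

import Mathlib

open Filter Topology

lemma grad_ineq {X : Type*} [NormedAddCommGroup X] [NormedSpace ℝ X]
    (I : X → ℝ) (I' : X → X →L[ℝ] ℝ)
    (hconv : ConvexOn ℝ Set.univ I)
    (hgateaux : ∀ u v : X, HasDerivAt (fun t : ℝ => I (u + t • v)) (I' u v) 0)
    (x y : X) : I x + I' x (y - x) ≤ I y := by
  set g : ℝ → ℝ := fun t : ℝ => I (x + t • (y - x)) with hg
  have hd := hgateaux x (y - x)
  rw [hasDerivAt_iff_tendsto_slope] at hd
  have hd' : Tendsto (slope g 0) (𝓝[>] 0) (𝓝 (I' x (y - x))) :=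
    hd.mono_left (nhdsWithin_mono _ (fun t ht => ne_of_gt ht))
  have hb : ∀ᶠ t in 𝓝[>] (0:ℝ), slope g 0 t ≤ I y - I x := by
    filter_upwards [Ioo_mem_nhdsGT_of_mem (Set.mem_Ico.2 ⟨le_refl (0:ℝ), zero_lt_one⟩)]
    intro t ht
    have h1 : g t ≤ (1 - t) * I x + t * I y := by
      have := hconv.2 (Set.mem_univ x) (Set.mem_univ y)
        (by linarith [ht.2] : (0:ℝ) ≤ 1 - t) (le_of_lt ht.1) (by ring)
      have he : (1 - t) • x + t • y = x + t • (y - x) := by module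
      rw [he] at this
      simpa [hg, smul_eq_mul] using this
    have h0 : g 0 = I x := by simp [hg]
    rw [slope_def_field, h0, sub_zero, div_le_iff₀ ht.1]
    nlinarith [h1]
  have := le_of_tendsto hd' hb
  linarith

lemma ray_tendsto (h : ℝ → ℝ) (d1 : ℝ) (hd1 : 0 < d1)
    (hsec : ∀ s : ℝ, 2 * d1 ≤ h (s + 1) + h (s - 1) - 2 * h s) :
    Tendsto (fun n : ℕ => h n) atTop atTop := by
  have step : ∀ n : ℕ, h 1 - h 0 + 2 * d1 * n ≤ h (n + 1) - h n := by
    intro n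
    induction n with
    | zero => simp
    | succ k ih =>
      have h2 := hsec ((k : ℝ) + 1)
      have e1 : (k:ℝ) + 1 - 1 = (k:ℝ) := by ring
      rw [e1] at h2
      push_cast
      push_cast at ih
      linarith
  have quad : ∀ n : ℕ, h 0 + n * (h 1 - h 0) + d1 * n * ((n:ℝ) - 1) ≤ h n := by
    intro n
    induction n with
    | zero => simp
    | succ k ih =>
      have hs := step k
      push_cast
      push_cast at ih hs
      nlinarith
  have t1 : Tendsto (fun n : ℕ => (n:ℝ)) atTop atTop := tendsto_natCast_atTop_atTop
  have t2 : Tendsto (fun n : ℕ => (h 1 - h 0) + d1 * ((n:ℝ) - 1)) atTop atTop :=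
    tendsto_atTop_add_const_left _ _
      ((tendsto_atTop_add_const_right _ _ t1).const_mul_atTop hd1)
  have t3 : Tendsto (fun n : ℕ => (n:ℝ) * ((h 1 - h 0) + d1 * ((n:ℝ) - 1))) atTop atTop :=
    t1.atTop_mul_atTop₀ t2
  have t4 := tendsto_atTop_add_const_left _ (h 0) t3
  apply tendsto_atTop_mono _ t4
  intro n
  have := quad n
  nlinarith [this]

/-- An (S₊)-type property: if `I` is convex, Gateaux differentiable, uniformly
convex with modulus `δ`, sequentially weakly lsc, `u_n ⇀ u`, `I(u_n)` converges
and `limsup ⟨I'(u_n), u_n - u⟩ ≤ 0`, then `u_n → u` strongly. -/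
theorem stmt_9 {X : Type*} [NormedAddCommGroup X] [NormedSpace ℝ X] [CompleteSpace X]
    (I : X → ℝ) (I' : X → X →L[ℝ] ℝ)
    (hconv : ConvexOn ℝ Set.univ I)
    (hgateaux : ∀ u v : X, HasDerivAt (fun t : ℝ => I (u + t • v)) (I' u v) 0)
    (δ : ℝ → ℝ) (hδmono : Monotone δ) (hδnonneg : ∀ t ≥ 0, 0 ≤ δ t)
    (hδpos : ∀ t > 0, 0 < δ t)
    (hunif : ∀ u v : X, (1 / 2) * I u + (1 / 2) * I v - I ((1 / 2 : ℝ) • (u + v))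
      ≥ δ ‖(1 / 2 : ℝ) • (u - v)‖)
    (hwlsc : ∀ (w : ℕ → X) (z : X),
      (∀ φ : X →L[ℝ] ℝ, Tendsto (fun n => φ (w n)) atTop (𝓝 (φ z))) →
      I z ≤ liminf (fun n => I (w n)) atTop)
    (u : ℕ → X) (w : X)
    (hweak : ∀ φ : X →L[ℝ] ℝ, Tendsto (fun n => φ (u n)) atTop (𝓝 (φ w)))
    (hIconv : ∃ c : ℝ, Tendsto (fun n => I (u n)) atTop (𝓝 c))
    (hlimsup : limsup (fun n => I' (u n) (u n - w)) atTop ≤ 0) :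
    Tendsto u atTop (𝓝 w) := by
  rcases subsingleton_or_nontrivial X with hX | hX
  · have hu : u = fun _ => w := funext fun n => Subsingleton.elim _ _
    rw [hu]; exact tendsto_const_nhds
  obtain ⟨c, hc⟩ := hIconv
  have hA : ∀ x y : X, I x + I' x (y - x) ≤ I y := grad_ineq I I' hconv hgateaux
  -- the key claim: c ≤ I w
  have hcw : c ≤ I w := by
    by_contra hlt
    push_neg at hlt
    set a : ℕ → ℝ := fun n => I' (u n) (u n - w) with ha
    have haL : ∀ n, I (u n) - I w ≤ a n := by
      intro n
      have h1 := hA (u n) w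
      have hne : I' (u n) (w - u n) = - a n := by
        rw [ha]
        rw [show w - u n = -(u n - w) by abel, map_neg]
      rw [hne] at h1
      linarith
    set ε := (c - I w) / 2 with hε
    have hεpos : 0 < ε := by rw [hε]; linarith
    have hev : ∀ᶠ n in atTop, ε ≤ a n := by
      have h1 : ∀ᶠ n in atTop, c - ε < I (u n) :=
        hc.eventually (eventually_gt_nhds (by linarith))
      filter_upwards [h1] with n hn
      have := haL n
      rw [hε] at hn ⊢
      linarith
    by_cases hS : {b : ℝ | ∀ᶠ n in atTop, a n ≤ b}.Nonempty
    · have h1 : ε ≤ limsup a atTop := by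
        rw [Filter.limsup_eq]
        apply le_csInf hS
        intro b hb
        obtain ⟨n, hn1, hn2⟩ := (hev.and hb).exists
        linarith
      linarith [hlimsup, h1]
    · -- `a` is not eventually bounded above; derive a contradiction with `hwlsc`
      obtain ⟨x, hx⟩ := exists_ne (0 : X)
      set v : ℕ → X := fun n => u n + (u n - w) with hv
      have hvI : ∀ n, a n + I (u n) ≤ I (v n) := by
        intro n
        have h1 := hA (u n) (v n)
        have he : v n - u n = u n - w := by rw [hv]; show u n + (u n - w) - u n = u n - w; abel
        rw [he] at h1
        rw [ha]
        linarith
      have hfreq : ∀ k : ℕ, ∃ᶠ n in atTop, (k:ℝ) < I (v n) := by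
        intro k
        have hnb : ¬ ∀ᶠ n in atTop, a n ≤ (k:ℝ) - (c - 1) := fun h => hS ⟨_, h⟩
        rw [Filter.not_eventually] at hnb
        have he : ∀ᶠ n in atTop, c - 1 < I (u n) :=
          hc.eventually (eventually_gt_nhds (by linarith))
        apply (hnb.and_eventually he).mono
        rintro n ⟨h1, h2⟩
        rw [not_le] at h1
        have := hvI n
        linarith
      obtain ⟨φ, hφm, hφ⟩ := Filter.extraction_forall_of_frequently hfreq
      have hvweak : ∀ ψ : X →L[ℝ] ℝ, Tendsto (fun n => ψ (v n)) atTop (𝓝 (ψ w)) := by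
        intro ψ
        have he : (fun n => ψ (v n)) = fun n => ψ (u n) + (ψ (u n) - ψ w) := by
          funext n; rw [hv]; simp
        rw [he]
        have h1 := hweak ψ
        have h2 : Tendsto (fun n => ψ (u n) + (ψ (u n) - ψ w)) atTop (𝓝 (ψ w + (ψ w - ψ w))) :=
          h1.add (h1.sub tendsto_const_nhds)
        simpa using h2
      -- coercivity along rays through w
      have hray : ∀ e : X, e ≠ 0 → Tendsto (fun n : ℕ => I (w + (n:ℝ) • e)) atTop atTop := by
        intro e he
        apply ray_tendsto (fun t => I (w + t • e)) (δ ‖e‖) (hδpos _ (norm_pos_iff.2 he))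
        intro s
        show 2 * δ ‖e‖ ≤ I (w + (s+1) • e) + I (w + (s-1) • e) - 2 * I (w + s • e)
        have h2 := hunif (w + (s+1) • e) (w + (s-1) • e)
        have e1 : (1/2 : ℝ) • ((w + (s+1) • e) + (w + (s-1) • e)) = w + s • e := by module
        have e2 : (1/2 : ℝ) • ((w + (s+1) • e) - (w + (s-1) • e)) = e := by module
        rw [e1, e2] at h2
        linarith
      have h1 := (hray x hx).eventually_gt_atTop 0
      have h2 := (hray (-x) (neg_ne_zero.2 hx)).eventually_gt_atTop 0
      obtain ⟨m, hm1, hm2⟩ := (h1.and h2).exists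
      set d : X := (m:ℝ) • x with hd
      have hwd1 : 0 < I (w + d) := hm1
      have hwd2 : 0 < I (w + -d) := by
        have he : w + (m:ℝ) • (-x) = w + -d := by rw [hd]; module
        rwa [he] at hm2
      have hmidv : ∀ n, I (v n) ≤ (1/2) * I (v n + d) + (1/2) * I (v n - d) := by
        intro n
        have h3 := hconv.2 (Set.mem_univ (v n + d)) (Set.mem_univ (v n - d))
          (by norm_num : (0:ℝ) ≤ 1/2) (by norm_num : (0:ℝ) ≤ 1/2) (by norm_num)
        have he : (1/2:ℝ) • (v n + d) + (1/2:ℝ) • (v n - d) = v n := by module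
        rw [he] at h3
        simpa [smul_eq_mul] using h3
      have contra : ∀ e : X, 0 < I (w + e) →
          (∃ᶠ k : ℕ in atTop, (k:ℝ) < I (v (φ k) + e)) → False := by
        intro e hIe hfr
        obtain ⟨ψ, hψm, hψ⟩ := Filter.extraction_of_frequently_atTop hfr
        have hzweak : ∀ ϑ : X →L[ℝ] ℝ,
            Tendsto (fun j => ϑ (v (φ (ψ j)) + e)) atTop (𝓝 (ϑ (w + e))) := by
          intro ϑ
          have h1 : Tendsto (fun j => ϑ (v (φ (ψ j)))) atTop (𝓝 (ϑ w)) :=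
            (hvweak ϑ).comp ((hφm.comp hψm).tendsto_atTop)
          have he2 : (fun j => ϑ (v (φ (ψ j)) + e)) = fun j => ϑ (v (φ (ψ j))) + ϑ e := by
            funext j; simp
          rw [he2, map_add]
          exact h1.add tendsto_const_nhds
        have hlsc := hwlsc (fun j => v (φ (ψ j)) + e) (w + e) hzweak
        have hlim : liminf (fun j => I (v (φ (ψ j)) + e)) atTop = 0 := by
          rw [Filter.liminf_eq]
          have huniv : {aa : ℝ | ∀ᶠ j in atTop, aa ≤ I (v (φ (ψ j)) + e)} = Set.univ := by
            ext aa
            simp only [Set.mem_setOf_eq, Set.mem_univ, iff_true]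
            have hge : ∀ᶠ j : ℕ in atTop, aa ≤ (j:ℝ) :=
              tendsto_natCast_atTop_atTop.eventually_ge_atTop aa
            filter_upwards [hge] with j hj
            have hle : (j:ℝ) ≤ (ψ j : ℝ) := by exact_mod_cast hψm.le_apply
            have := hψ j
            linarith
          rw [huniv]
          exact Real.sSup_of_not_bddAbove not_bddAbove_univ
        rw [hlim] at hlsc
        linarith
      have hor : ∀ k : ℕ, (k:ℝ) < I (v (φ k) + d) ∨ (k:ℝ) < I (v (φ k) + -d) := by
        intro k
        by_contra hcon
        push_neg at hcon
        have h3 := hmidv (φ k)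
        have h4 := hφ k
        rw [← sub_eq_add_neg] at hcon
        linarith [hcon.1, hcon.2]
      have hfor : ∃ᶠ k : ℕ in atTop,
          ((k:ℝ) < I (v (φ k) + d) ∨ (k:ℝ) < I (v (φ k) + -d)) :=
        (Filter.Eventually.of_forall hor).frequently
      rw [Filter.frequently_or_distrib] at hfor
      rcases hfor with hside | hside
      · exact contra d hwd1 hside
      · exact contra (-d) hwd2 hside
  -- conclude strong convergence
  have key : ∀ ε : ℝ, 0 < ε → ∀ᶠ n in atTop, ‖u n - w‖ < ε := by
    intro ε hεp
    have hδe : 0 < δ (ε/2) := hδpos _ (by linarith)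
    have hr : Tendsto (fun n => I' w ((1/2:ℝ) • (u n + w) - w)) atTop (𝓝 0) := by
      have he : (fun n => I' w ((1/2:ℝ) • (u n + w) - w))
          = fun n => (1/2:ℝ) * (I' w (u n)) - (1/2:ℝ) * (I' w w) := by
        funext n
        have he2 : (1/2:ℝ) • (u n + w) - w = (1/2:ℝ) • (u n) - (1/2:ℝ) • w := by module
        rw [he2, map_sub, map_smul, map_smul]
        simp [smul_eq_mul]
      rw [he]
      have h2 := ((hweak (I' w)).const_mul (1/2:ℝ)).sub
        (tendsto_const_nhds : Tendsto (fun _ : ℕ => (1/2:ℝ) * (I' w w)) atTop _)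
      simpa using h2
    have hIun : ∀ᶠ n in atTop,
        (1/2) * I (u n) - (1/2) * I w - I' w ((1/2:ℝ) • (u n + w) - w) < δ (ε/2) := by
      have ht : Tendsto
          (fun n => (1/2) * I (u n) - (1/2) * I w - I' w ((1/2:ℝ) • (u n + w) - w))
          atTop (𝓝 ((1/2) * c - (1/2) * I w - 0)) :=
        ((hc.const_mul _).sub tendsto_const_nhds).sub hr
      exact ht.eventually (eventually_lt_nhds (by linarith))
    filter_upwards [hIun] with n hn
    have h2 := hunif (u n) w
    have h3 := hA w ((1/2:ℝ) • (u n + w))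
    have h4 : δ ‖(1/2:ℝ) • (u n - w)‖ < δ (ε/2) := by linarith
    by_contra hcon
    push_neg at hcon
    have h5 : ε/2 ≤ ‖(1/2:ℝ) • (u n - w)‖ := by
      rw [norm_smul]
      simp only [norm_div, Real.norm_ofNat, norm_one]
      linarith
    exact absurd (hδmono h5) (not_le.2 h4)
  rw [← tendsto_sub_nhds_zero_iff, NormedAddCommGroup.tendsto_nhds_zero]
  exact key
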